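/- If q is a proper quadratic refinement of a symmetric bilinear form on a finite-dimensional Z/2Z-vector space V, then the Gauss sum Σ_{v ∈ V} i^{q(v)} has absolute value √2^{dim V + dim rad}, where rad is the radical of the form and q vanishes on rad. In particular the Gauss sum is nonzero, so the Brown invariant β(q) ∈ Z/8Z is well defined. -/

import Mathlib

/-- The nontrivial homomorphism `Z/2 → Z/4` sending 1 to 2. -/
def iota (a : ZMod 2) : ZMod 4 := 2 * (a.val : ZMod 4)

open Complex Finset

private noncomputable def ff (a : ZMod 4) : ℂ := I ^ a.val

private lemma I_pow_mod (n : ℕ) : (I : ℂ) ^ (n % 4) = I ^ n := by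
  conv_rhs => rw [← Nat.div_add_mod n 4, pow_add, pow_mul, I_pow_four, one_pow, one_mul]

private lemma ff_add (a b : ZMod 4) : ff (a + b) = ff a * ff b := by
  unfold ff
  rw [← pow_add, ZMod.val_add, I_pow_mod]

private lemma ff_zero : ff 0 = 1 := rfl

private lemma conj_ff (a : ZMod 4) : (starRingEnd ℂ) (ff a) = ff (-a) := by
  have h1 : ff a * ff (-a) = 1 := by rw [← ff_add, add_neg_cancel, ff_zero]
  have h2 : ff a * (starRingEnd ℂ) (ff a) = 1 := by
    unfold ff
    rw [mul_comm, ← Complex.normSq_eq_conj_mul_self, map_pow, Complex.normSq_I, one_pow,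
      Complex.ofReal_one]
  have hne : ff a ≠ 0 := by
    intro h; rw [h, zero_mul] at h1; exact zero_ne_one h1
  exact mul_left_cancel₀ hne (h2.trans h1.symm)

open Complex in
/-- The Gauss sum of a proper quadratic refinement `q` of a symmetric bilinear form
`B` on a finite-dimensional `Z/2`-vector space has absolute value
`√2 ^ (dim V + dim rad)`; in particular it is nonzero, so the Brown invariant is
well defined. -/
theorem stmt15 {V : Type*} [AddCommGroup V] [Module (ZMod 2) V] [Fintype V]
    (B : V →ₗ[ZMod 2] V →ₗ[ZMod 2] ZMod 2)
    (hBsymm : ∀ x y, B x y = B y x)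
    (q : V → ZMod 4)
    (hq : ∀ x y, q (x + y) - q x - q y = iota (B x y))
    (hproper : ∀ x ∈ LinearMap.ker B, q x = 0) :
    ‖(∑ v : V, I ^ (q v).val)‖ =
      Real.sqrt 2 ^ (Module.finrank (ZMod 2) V +
        Module.finrank (ZMod 2) (LinearMap.ker B)) ∧
    (∑ v : V, I ^ (q v).val) ≠ 0 := by
  classical
  set n := Module.finrank (ZMod 2) V
  set r := Module.finrank (ZMod 2) (LinearMap.ker B)
  set S : ℂ := ∑ v : V, I ^ (q v).val with hS
  have hSf : S = ∑ v : V, ff (q v) := rfl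
  -- the sign character
  set g : ZMod 2 → ℂ := fun b => ff (iota b) with hg
  have hg0 : g 0 = 1 := ff_zero
  have hg1 : g 1 = -1 := by
    show ff (iota 1) = -1
    have : iota 1 = 2 := by decide
    rw [this]
    show I ^ (2 : ZMod 4).val = -1
    rw [show (2 : ZMod 4).val = 2 from rfl, I_sq]
  have hg_add : ∀ a b : ZMod 2, g (a + b) = g a * g b := by
    have h2 : ∀ c : ZMod 2, c = 0 ∨ c = 1 := by decide
    intro a b
    rcases h2 a with ha | ha <;> rcases h2 b with hb | hb <;>
      rw [ha, hb] <;>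
      simp [hg0, hg1, show (1 + 1 : ZMod 2) = 0 from by decide]
  -- character orthogonality
  have h2 : ∀ c : ZMod 2, c = 0 ∨ c = 1 := by decide
  have hchar : ∀ u : V, (∑ w : V, g (B u w)) =
      if B u = 0 then (Fintype.card V : ℂ) else 0 := by
    intro u
    by_cases h : B u = 0
    · simp [h, hg0, Finset.card_univ]
    · rw [if_neg h]
      obtain ⟨w0, hw0⟩ : ∃ w0, B u w0 ≠ 0 := by
        by_contra hc
        push_neg at hc
        exact h (LinearMap.ext fun w => hc w)
      have hw1 : B u w0 = 1 := (h2 (B u w0)).resolve_left hw0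
      have hre : (∑ w : V, g (B u w)) = ∑ w : V, g (B u (w + w0)) :=
        (Fintype.sum_equiv (Equiv.addRight w0) _ _ (fun w => rfl)).symm
      have : (∑ w : V, g (B u w)) = -(∑ w : V, g (B u w)) := by
        calc (∑ w : V, g (B u w)) = ∑ w : V, g (B u (w + w0)) := hre
          _ = ∑ w : V, g (B u w) * g (B u w0) := by
              refine Finset.sum_congr rfl fun w _ => ?_
              rw [map_add, hg_add]
          _ = -(∑ w : V, g (B u w)) := by
              rw [hw1, hg1]
              rw [← Finset.sum_neg_distrib]
              exact Finset.sum_congr rfl fun w _ => by ring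
      linear_combination this / 2
  -- main computation of S * conj S
  have key : S * (starRingEnd ℂ) S =
      (Fintype.card V : ℂ) * (Fintype.card (LinearMap.ker B) : ℂ) := by
    rw [hSf, map_sum]
    calc (∑ v : V, ff (q v)) * ∑ w : V, (starRingEnd ℂ) (ff (q w))
        = ∑ v : V, ∑ w : V, ff (q v) * ff (-(q w)) := by
          rw [Finset.sum_mul_sum]
          exact Finset.sum_congr rfl fun v _ => Finset.sum_congr rfl fun w _ => by
            rw [conj_ff]
      _ = ∑ w : V, ∑ v : V, ff (q v - q w) := by
          rw [Finset.sum_comm]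
          exact Finset.sum_congr rfl fun w _ => Finset.sum_congr rfl fun v _ => by
            rw [← ff_add, sub_eq_add_neg]
      _ = ∑ w : V, ∑ u : V, ff (q u) * g (B u w) := by
          refine Finset.sum_congr rfl fun w _ => ?_
          refine (Fintype.sum_equiv (Equiv.addRight w) _ _ (fun u => ?_)).symm
          have harg : q u + iota (B u w) = q (u + w) - q w := by
            linear_combination -(hq u w)
          show ff (q u) * g (B u w) = ff (q (u + w) - q w)
          rw [← ff_add, harg]
      _ = ∑ u : V, ff (q u) * ∑ w : V, g (B u w) := by
          rw [Finset.sum_comm]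
          exact Finset.sum_congr rfl fun u _ => (Finset.mul_sum _ _ _).symm
      _ = ∑ u : V, if B u = 0 then ff (q u) * (Fintype.card V : ℂ) else 0 := by
          refine Finset.sum_congr rfl fun u _ => ?_
          rw [hchar u, mul_ite, mul_zero]
      _ = (Fintype.card V : ℂ) * (Fintype.card (LinearMap.ker B) : ℂ) := by
          rw [Finset.sum_ite, Finset.sum_const_zero, add_zero]
          have hone : ∀ u ∈ Finset.univ.filter (fun u => B u = 0),
              ff (q u) * (Fintype.card V : ℂ) = (Fintype.card V : ℂ) := by
            intro u hu
            have hu0 : q u = 0 := hproper u (LinearMap.mem_ker.mpr (Finset.mem_filter.mp hu).2)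
            rw [hu0, ff_zero, one_mul]
          rw [Finset.sum_congr rfl hone, Finset.sum_const, nsmul_eq_mul]
          have hcard : (Finset.univ.filter (fun u : V => B u = 0)).card =
              Fintype.card (LinearMap.ker B) := by
            rw [Fintype.card_subtype]
            simp [LinearMap.mem_ker]
          rw [hcard, mul_comm]
  -- cardinalities
  have hcV : Fintype.card V = 2 ^ n := by
    have := Module.card_eq_pow_finrank (K := ZMod 2) (V := V)
    rwa [ZMod.card] at this
  have hcK : Fintype.card (LinearMap.ker B) = 2 ^ r := by
    have := Module.card_eq_pow_finrank (K := ZMod 2) (V := LinearMap.ker B)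
    rwa [ZMod.card] at this
  have hnormSq : Complex.normSq S = 2 ^ (n + r) := by
    have := key
    rw [Complex.mul_conj] at this
    have h' : (Complex.normSq S : ℂ) = ((2 : ℝ) ^ (n + r) : ℝ) := by
      rw [this, hcV, hcK]
      push_cast
      ring
    exact_mod_cast h'
  have habs : ‖S‖ = Real.sqrt 2 ^ (n + r) := by
    rw [Complex.norm_def, hnormSq]
    rw [show (2 : ℝ) ^ (n + r) = (Real.sqrt 2 ^ (n + r)) ^ 2 by
      rw [← pow_mul, mul_comm, pow_mul, Real.sq_sqrt (by norm_num : (0:ℝ) ≤ 2)]]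
    exact Real.sqrt_sq (by positivity)
  refine ⟨habs, ?_⟩
  intro h0
  rw [h0, norm_zero] at habs
  have : (0:ℝ) < Real.sqrt 2 ^ (n + r) := by positivity
  rw [← habs] at this
  exact lt_irrefl 0 this
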